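/- Let K be a differential field of characteristic zero and t a primitive generator over K. If g ∈ K[t] + K(t)′ is t-simple (t-proper with squarefree denominator), then g = 0. -/

import Mathlib

open Polynomial
set_option synthInstance.maxHeartbeats 1000000
set_option maxHeartbeats 1000000
namespace SimpleAux
variable {F : Type*} [Field F]

variable {F : Type*} [Field F]

theorem dzero (δ : F → F) (hδadd : ∀ a b : F, δ (a + b) = δ a + δ b) : δ 0 = 0 := by
  have h := hδadd 0 0; simp only [add_zero] at h; exact (left_eq_add.mp h)

theorem done' (δ : F → F) (hδmul : ∀ a b : F, δ (a * b) = δ a * b + a * δ b) : δ 1 = 0 := by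
  have h := hδmul 1 1; simp only [mul_one, one_mul] at h; exact (left_eq_add.mp h)

theorem dpow (δ : F → F) (hδmul : ∀ a b : F, δ (a * b) = δ a * b + a * δ b)
    (x : F) (k : ℕ) : δ (x ^ (k + 1)) = (k + 1 : ℕ) * x ^ k * δ x := by
  induction k with
  | zero => simp [hδmul]
  | succ n ih =>
    have : x ^ (n + 2) = x ^ (n + 1) * x := by ring
    rw [this, hδmul, ih]; push_cast; ring

theorem dquot (δ : F → F) (hδmul : ∀ a b : F, δ (a * b) = δ a * b + a * δ b)
    (x y : F) (hy : y ≠ 0) : δ (x / y) = (δ x * y - x * δ y) / y ^ 2 := by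
  have hxy : x / y * y = x := div_mul_cancel₀ x hy
  have h2 : δ x = δ (x / y) * y + x / y * δ y := by
    conv_lhs => rw [← hxy]
    exact hδmul _ _
  have h3 : y ^ 2 * δ (x / y) = δ x * y - x * δ y := by
    calc y ^ 2 * δ (x / y) = (δ (x / y) * y + x / y * δ y) * y - x / y * y * δ y := by ring
    _ = δ x * y - x * δ y := by rw [← h2, hxy]
  rw [eq_div_iff (pow_ne_zero 2 hy)]
  linear_combination h3

noncomputable def Dpoly (δ : F → F) (K : Subfield F) (hK : ∀ a ∈ K, δ a ∈ K) (τ : ↥K)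
    (P : Polynomial ↥K) : Polynomial ↥K :=
  P.sum (fun n c => C (⟨δ c, hK c c.2⟩ : ↥K) * X ^ n) + P.derivative * C τ

variable (δ : F → F) (K : Subfield F) (hK : ∀ a ∈ K, δ a ∈ K) (τ : ↥K)
  (hδadd : ∀ a b : F, δ (a + b) = δ a + δ b)
  (hδmul : ∀ a b : F, δ (a * b) = δ a * b + a * δ b)

include hδadd in
theorem coe_dzero : (⟨δ ((0 : ↥K) : F), hK _ (0 : ↥K).2⟩ : ↥K) = 0 := by
  ext; simp only [ZeroMemClass.coe_zero]; exact dzero δ hδadd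

include hδadd in
theorem Dpoly_add (P Q : Polynomial ↥K) :
    Dpoly δ K hK τ (P + Q) = Dpoly δ K hK τ P + Dpoly δ K hK τ Q := by
  unfold Dpoly
  rw [Polynomial.sum_add_index, derivative_add]
  · rw [add_mul]; exact add_add_add_comm _ _ _ _
  · intro i
    rw [coe_dzero δ K hK hδadd, map_zero, zero_mul]
  · intro a b₁ b₂
    have : (⟨δ ((b₁ + b₂ : ↥K) : F), hK _ (b₁ + b₂).2⟩ : ↥K)
        = ⟨δ (b₁ : F), hK _ b₁.2⟩ + ⟨δ (b₂ : F), hK _ b₂.2⟩ := by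
      ext; push_cast; exact hδadd _ _
    rw [this, C_add, add_mul]

include hδadd in
theorem Dpoly_monomial (n : ℕ) (c : ↥K) :
    Dpoly δ K hK τ (monomial n c)
      = C (⟨δ c, hK c c.2⟩ : ↥K) * X ^ n + monomial (n - 1) (c * n) * C τ := by
  unfold Dpoly
  rw [Polynomial.sum_monomial_index, derivative_monomial]
  rw [coe_dzero δ K hK hδadd, map_zero, zero_mul]

include hδadd hδmul in
theorem aeval_Dpoly (t : F) (hτ : (τ : F) = δ t) (P : Polynomial ↥K) :
    aeval t (Dpoly δ K hK τ P) = δ (aeval t P) := by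
  induction P using Polynomial.induction_on' with
  | add p q hp hq =>
    rw [Dpoly_add δ K hK τ hδadd, map_add, map_add, hδadd, hp, hq]
  | monomial n c =>
    rw [Dpoly_monomial δ K hK τ hδadd, map_add, map_mul, map_mul, aeval_C, aeval_C, map_pow, aeval_X,
      aeval_monomial, aeval_monomial]
    have hemb : ∀ x : ↥K, (algebraMap ↥K F) x = (x : F) := fun x => rfl
    rw [hemb, hemb, hemb, hemb]
    rw [hδmul]
    cases n with
    | zero => simp [done' δ hδmul]
    | succ k =>
      rw [dpow δ hδmul t k, hτ]
      push_cast
      ring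

theorem degree_Dpoly_le (P : Polynomial ↥K) : (Dpoly δ K hK τ P).degree ≤ P.degree := by
  unfold Dpoly
  refine (degree_add_le _ _).trans (max_le ?_ ?_)
  · rw [Polynomial.sum_def]
    refine (degree_sum_le _ _).trans ?_
    refine Finset.sup_le fun n hn => ?_
    exact (degree_C_mul_X_pow_le _ _).trans (le_degree_of_ne_zero (mem_support_iff.mp hn))
  · refine (degree_mul_le _ _).trans ?_
    conv_rhs => rw [← add_zero P.degree]
    exact add_le_add degree_derivative_le degree_C_le

include hδadd hδmul in
theorem degree_Dpoly_lt (P : Polynomial ↥K) (hm : P.Monic) (h1 : 0 < P.degree) :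
    (Dpoly δ K hK τ P).degree < P.degree := by
  have hn : 0 < P.natDegree := natDegree_pos_iff_degree_pos.mpr h1
  set n := P.natDegree with hn'
  have hPX : P = X ^ n + (P - X ^ n) := eq_add_of_sub_eq' rfl
  have hdegP : P.degree = (n : WithBot ℕ) := degree_eq_natDegree hm.ne_zero
  have hsub : (P - X ^ n).degree < P.degree := by
    refine degree_sub_lt ?_ hm.ne_zero ?_
    · rw [degree_X_pow, hdegP]
    · rw [hm.leadingCoeff, leadingCoeff_X_pow]
  have hXn : (Dpoly δ K hK τ (X ^ n)).degree < P.degree := by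
    have hX : (X ^ n : Polynomial ↥K) = monomial n 1 := X_pow_eq_monomial n
    rw [hX, Dpoly_monomial δ K hK τ hδadd]
    have h10 : (⟨δ ((1 : ↥K) : F), hK _ (1 : ↥K).2⟩ : ↥K) = 0 := by
      ext; simp only [OneMemClass.coe_one]; exact done' δ hδmul
    rw [h10, map_zero, zero_mul, zero_add]
    refine lt_of_le_of_lt ((degree_mul_le _ _).trans ?_) (?_ : ((n - 1 : ℕ) : WithBot ℕ) < P.degree)
    · conv_rhs => rw [← add_zero ((n - 1 : ℕ) : WithBot ℕ)]
      exact add_le_add (degree_monomial_le _ _) degree_C_le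
    · rw [hdegP]
      exact_mod_cast Nat.sub_lt hn one_pos
  calc (Dpoly δ K hK τ P).degree
      = (Dpoly δ K hK τ (X ^ n) + Dpoly δ K hK τ (P - X ^ n)).degree := by
        rw [← Dpoly_add δ K hK τ hδadd, ← hPX]
    _ ≤ max (Dpoly δ K hK τ (X ^ n)).degree (Dpoly δ K hK τ (P - X ^ n)).degree :=
        degree_add_le _ _
    _ < P.degree := max_lt hXn ((degree_Dpoly_le δ K hK τ _).trans_lt hsub)


namespace SimpleAux2


theorem exists_frac (K : Subfield F) (t : F)
    (hinj : ∀ p : Polynomial ↥K, aeval t p = 0 → p = 0)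
    (hgen : Subfield.closure ((K : Set F) ∪ {t}) = ⊤) (x : F) :
    ∃ u w : Polynomial ↥K, w ≠ 0 ∧ x = aeval t u / aeval t w := by
  have hne : ∀ w : Polynomial ↥K, w ≠ 0 → aeval t w ≠ 0 := fun w hw h => hw (hinj w h)
  let S : Subfield F :=
  { carrier := {x | ∃ u w : Polynomial ↥K, w ≠ 0 ∧ x = aeval t u / aeval t w}
    zero_mem' := ⟨0, 1, one_ne_zero, by simp⟩
    one_mem' := ⟨1, 1, one_ne_zero, by simp⟩
    add_mem' := by
      rintro a b ⟨u1, w1, h1, rfl⟩ ⟨u2, w2, h2, rfl⟩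
      exact ⟨u1 * w2 + w1 * u2, w1 * w2, mul_ne_zero h1 h2, by
        rw [map_add, map_mul, map_mul, map_mul, div_add_div _ _ (hne w1 h1) (hne w2 h2)]⟩
    mul_mem' := by
      rintro a b ⟨u1, w1, h1, rfl⟩ ⟨u2, w2, h2, rfl⟩
      exact ⟨u1 * u2, w1 * w2, mul_ne_zero h1 h2, by
        rw [map_mul, map_mul, div_mul_div_comm]⟩
    neg_mem' := by
      rintro a ⟨u, w, h, rfl⟩
      exact ⟨-u, w, h, by rw [map_neg, neg_div]⟩
    inv_mem' := by
      rintro a ⟨u, w, h, rfl⟩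
      by_cases hu : u = 0
      · exact ⟨0, 1, one_ne_zero, by simp [hu]⟩
      · exact ⟨w, u, hu, by rw [inv_div]⟩ }
  have hle : Subfield.closure ((K : Set F) ∪ {t}) ≤ S := by
    rw [Subfield.closure_le]
    rintro y (hy | rfl)
    · exact ⟨C ⟨y, hy⟩, 1, one_ne_zero, by simp [aeval_C]; rfl⟩
    · exact ⟨X, 1, one_ne_zero, by simp⟩
  rw [hgen] at hle
  exact hle (Subfield.mem_top x)

end SimpleAux2

end SimpleAux

open Polynomial SimpleAux

/-- Let `K` be a differential field of characteristic zero and `t` a primitive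
generator over `K`, with `F = K(t)`.  If `g ∈ K[t] + K(t)′` is `t`-simple
(`t`-proper with squarefree denominator), then `g = 0`. -/
theorem simple_in_polynomials_plus_derivatives_is_zero (F : Type*) [Field F] [CharZero F]
    (δ : F → F)
    (hδadd : ∀ a b : F, δ (a + b) = δ a + δ b)
    (hδmul : ∀ a b : F, δ (a * b) = δ a * b + a * δ b)
    (K : Subfield F) (hK : ∀ a ∈ K, δ a ∈ K)
    (t : F) (htr : Transcendental ↥K t) (ht : δ t ∈ K)
    (hgen : Subfield.closure ((K : Set F) ∪ {t}) = ⊤)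
    (hnewconst : ∀ c : F, δ c = 0 → c ∈ K)
    (g : F)
    (hmem : ∃ (p : Polynomial ↥K) (h : F), g = Polynomial.aeval t p + δ h)
    (hsimple : ∃ p q : Polynomial ↥K, q ≠ 0 ∧ p.degree < q.degree ∧ Squarefree q ∧
      g = Polynomial.aeval t p / Polynomial.aeval t q) :
    g = 0 := by
  classical
  obtain ⟨p, h, hg1⟩ := hmem
  obtain ⟨A0, B0, hB0, hdeg0, hsf0, hg2⟩ := hsimple
  have hinj : ∀ q : Polynomial ↥K, aeval t q = 0 → q = 0 := transcendental_iff.mp htr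
  have hinjeq : ∀ P Q : Polynomial ↥K, aeval t P = aeval t Q → P = Q := by
    intro P Q hPQ
    exact sub_eq_zero.mp (hinj (P - Q) (by rw [map_sub, hPQ, sub_self]))
  have hne : ∀ w : Polynomial ↥K, w ≠ 0 → aeval t w ≠ 0 := fun w hw hh => hw (hinj w hh)
  haveI : CharZero ↥K :=
    ⟨fun a b hab => Nat.cast_injective (R := F)
      (by simpa using congrArg (fun x : ↥K => (x : F)) hab)⟩
  by_contra hg
  have hA0 : A0 ≠ 0 := by rintro rfl; exact hg (by rw [hg2]; simp)
  letI : GCDMonoid (Polynomial ↥K) := EuclideanDomain.gcdMonoid _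
  set G := GCDMonoid.gcd A0 B0 with hGdef
  have hGd1 : G ∣ A0 := gcd_dvd_left _ _
  have hGd2 : G ∣ B0 := gcd_dvd_right _ _
  have hGne : G ≠ 0 := gcd_ne_zero_of_left hA0
  set A := A0 / G with hAdef
  set B := B0 / G with hBdef
  have hA0eq : G * A = A0 := EuclideanDomain.mul_div_cancel' hGne hGd1
  have hB0eq : G * B = B0 := EuclideanDomain.mul_div_cancel' hGne hGd2
  have hcop : IsCoprime A B := isCoprime_div_gcd_div_gcd hB0
  have hAne : A ≠ 0 := fun hA => hA0 (by rw [← hA0eq, hA, mul_zero])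
  have hBne : B ≠ 0 := fun hB => hB0 (by rw [← hB0eq, hB, mul_zero])
  have hsf : Squarefree B := Squarefree.squarefree_of_dvd ⟨G, by rw [← hB0eq]; ring⟩ hsf0
  have hdeg : A.degree < B.degree := by
    have h1 : G.degree + A.degree < G.degree + B.degree := by
      rw [← degree_mul, ← degree_mul, hA0eq, hB0eq]; exact hdeg0
    exact ((WithBot.add_lt_add_iff_left (fun hbot => hGne (degree_eq_bot.mp hbot))).mp h1)
  have hg3 : g = aeval t A / aeval t B := by
    rw [hg2, ← hA0eq, ← hB0eq, map_mul, map_mul, mul_div_mul_left _ _ (hne G hGne)]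
  have hBdeg : 0 < B.degree := by
    by_contra hle
    push_neg at hle
    exact hAne (degree_eq_bot.mp (Nat.WithBot.lt_zero_iff.mp (lt_of_lt_of_le hdeg hle)))
  obtain ⟨d, hdm, hdi, hddvd⟩ :=
    B.exists_monic_irreducible_factor (not_isUnit_of_degree_pos _ hBdeg)
  have hdp : Prime d := hdi.prime
  have hddeg : 0 < d.degree := degree_pos_of_irreducible hdi
  have hdnz : d ≠ 0 := hdi.ne_zero
  obtain ⟨B₁, hB₁⟩ := hddvd
  have hB₁ne : B₁ ≠ 0 := fun h0 => hBne (by rw [hB₁, h0, mul_zero])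
  have hdB₁ : ¬ d ∣ B₁ := by
    rintro ⟨c, hc⟩
    exact hdi.not_isUnit (hsf d ⟨c, by rw [hB₁, hc]; ring⟩)
  have hdA : ¬ d ∣ A := fun hdvdA =>
    hdi.not_isUnit (hcop.isUnit_of_dvd' hdvdA (hB₁ ▸ Dvd.intro B₁ rfl))
  have hext : ∀ w0 : Polynomial ↥K, w0 ≠ 0 →
      ∃ (mm : ℕ) (w : Polynomial ↥K), w0 = d ^ mm * w ∧ ¬ d ∣ w := by
    intro w0 hw0
    have hfin := Polynomial.finiteMultiplicity_of_degree_pos_of_monic hddeg hdm hw0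
    obtain ⟨c, hc, hnd⟩ := hfin.exists_eq_pow_mul_and_not_dvd
    exact ⟨_, c, hc, hnd⟩
  obtain ⟨u, w, m, hwne, hdw, hrep, hdu⟩ :
      ∃ (u w : Polynomial ↥K) (m : ℕ), w ≠ 0 ∧ ¬ d ∣ w ∧
        h = aeval t u / aeval t (d ^ m * w) ∧ (m ≠ 0 → ¬ d ∣ u) := by
    obtain ⟨u0, w0, hw0, hh⟩ := SimpleAux2.exists_frac K t hinj hgen h
    obtain ⟨mw, w, hw0eq, hdw⟩ := hext w0 hw0
    have hwne : w ≠ 0 := fun h0 => hw0 (by rw [hw0eq, h0, mul_zero])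
    by_cases hu0 : u0 = 0
    · refine ⟨0, 1, 0, one_ne_zero, fun hdd => hdi.not_isUnit (isUnit_of_dvd_one hdd), ?_,
        fun hm => absurd rfl hm⟩
      rw [hh, hu0]; simp
    · obtain ⟨mu, u, hu0eq, hdu⟩ := hext u0 hu0
      have hune : u ≠ 0 := fun h0 => hu0 (by rw [hu0eq, h0, mul_zero])
      rcases le_or_gt mw mu with hle | hlt
      · refine ⟨d ^ (mu - mw) * u, w, 0, hwne, hdw, ?_, fun hm => absurd rfl hm⟩
        rw [hh, hw0eq, hu0eq, pow_zero, one_mul,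
          div_eq_div_iff (hne _ (mul_ne_zero (pow_ne_zero _ hdnz) hwne)) (hne _ hwne),
          ← map_mul, ← map_mul]
        congr 1
        have hmu : d ^ mu = d ^ (mu - mw) * d ^ mw := by
          rw [← pow_add, Nat.sub_add_cancel hle]
        rw [hmu]; ring
      · refine ⟨u, w, mw - mu, hwne, hdw, ?_, fun _ => hdu⟩
        rw [hh, hw0eq, hu0eq,
          div_eq_div_iff (hne _ (mul_ne_zero (pow_ne_zero _ hdnz) hwne))
            (hne _ (mul_ne_zero (pow_ne_zero _ hdnz) hwne)),
          ← map_mul, ← map_mul]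
        congr 1
        have hmw : d ^ mw = d ^ (mw - mu) * d ^ mu := by
          rw [← pow_add, Nat.sub_add_cancel hlt.le]
        rw [hmw]; ring
  have hDne : aeval t d ≠ 0 := hne d hdnz
  have hWne : aeval t w ≠ 0 := hne w hwne
  have hB1ne : aeval t B₁ ≠ 0 := hne B₁ hB₁ne
  set τ : ↥K := (⟨δ t, ht⟩ : ↥K) with hτdef
  set Dp := Dpoly δ K hK τ with hDpdef
  have haD : ∀ P : Polynomial ↥K, aeval t (Dp P) = δ (aeval t P) := fun P =>
    aeval_Dpoly δ K hK τ hδadd hδmul t rfl P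
  have hEq : aeval t A / (aeval t d * aeval t B₁) = aeval t p + δ h := by
    rw [← map_mul, ← hB₁, ← hg3, hg1]
  have hdB1ne : aeval t d * aeval t B₁ ≠ 0 := mul_ne_zero hDne hB1ne
  cases m with
  | zero =>
    have hh' : h = aeval t u / aeval t w := by rw [hrep, pow_zero, one_mul]
    have hδh : δ h =
        (aeval t (Dp u) * aeval t w - aeval t u * aeval t (Dp w)) / (aeval t w) ^ 2 := by
      rw [hh', dquot δ hδmul _ _ hWne, ← haD u, ← haD w]
    rw [hδh] at hEq
    rw [add_div' _ _ _ (pow_ne_zero 2 hWne)] at hEq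
    have hEq2 := (div_eq_div_iff hdB1ne (pow_ne_zero 2 hWne)).mp hEq
    have hFmain : aeval t (A * w ^ 2) =
        aeval t ((p * w ^ 2 + (Dp u * w - u * Dp w)) * (d * B₁)) := by
      simp only [map_add, map_mul, map_sub, map_pow]
      linear_combination hEq2
    have hP := hinjeq _ _ hFmain
    have hdvd : d ∣ A * w ^ 2 :=
      ⟨(p * w ^ 2 + (Dp u * w - u * Dp w)) * B₁, by rw [hP]; ring⟩
    rcases hdp.dvd_mul.mp hdvd with h1 | h2
    · exact hdA h1
    · exact hdw (hdp.dvd_of_dvd_pow h2)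
  | succ k =>
    have hdkne : aeval t d ^ (k + 1) * aeval t w ≠ 0 :=
      mul_ne_zero (pow_ne_zero _ hDne) hWne
    have hh' : h = aeval t u / (aeval t d ^ (k + 1) * aeval t w) := by
      rw [hrep, map_mul, map_pow]
    have hδh : δ h =
        (aeval t (Dp u) * (aeval t d ^ (k + 1) * aeval t w) -
          aeval t u * (((k + 1 : ℕ) : F) * aeval t d ^ k * aeval t (Dp d) * aeval t w +
            aeval t d ^ (k + 1) * aeval t (Dp w))) /
          (aeval t d ^ (k + 1) * aeval t w) ^ 2 := by
      rw [hh', dquot δ hδmul _ _ hdkne, hδmul (aeval t d ^ (k + 1)) (aeval t w),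
        dpow δ hδmul (aeval t d) k, ← haD u, ← haD d, ← haD w]
    rw [hδh] at hEq
    rw [add_div' _ _ _ (pow_ne_zero 2 hdkne)] at hEq
    have hEq2 := (div_eq_div_iff hdB1ne (pow_ne_zero 2 hdkne)).mp hEq
    have hFmain : aeval t (A * d ^ (k + 1) * w ^ 2) =
        aeval t (p * d ^ (k + 2) * B₁ * w ^ 2 +
          (Dp u * d * w - ((k + 1 : ℕ) : Polynomial ↥K) * u * Dp d * w - u * d * Dp w) * B₁) := by
      apply mul_left_cancel₀ (pow_ne_zero (k + 1) hDne)
      simp only [map_add, map_mul, map_sub, map_pow, map_natCast]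
      linear_combination hEq2
    have hP := hinjeq _ _ hFmain
    have hdvdM : d ∣ (Dp u * d * w - ((k + 1 : ℕ) : Polynomial ↥K) * u * Dp d * w
        - u * d * Dp w) * B₁ := by
      have e : (Dp u * d * w - ((k + 1 : ℕ) : Polynomial ↥K) * u * Dp d * w - u * d * Dp w) * B₁
          = A * d ^ (k + 1) * w ^ 2 - p * d ^ (k + 2) * B₁ * w ^ 2 := by
        rw [hP]; ring
      rw [e]
      exact dvd_sub ⟨A * d ^ k * w ^ 2, by ring⟩ ⟨p * d ^ (k + 1) * B₁ * w ^ 2, by ring⟩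
    have hdM : d ∣ Dp u * d * w - ((k + 1 : ℕ) : Polynomial ↥K) * u * Dp d * w - u * d * Dp w :=
      (hdp.dvd_mul.mp hdvdM).resolve_right hdB₁
    have hd3 : d ∣ ((k + 1 : ℕ) : Polynomial ↥K) * u * Dp d * w := by
      have e : ((k + 1 : ℕ) : Polynomial ↥K) * u * Dp d * w
          = Dp u * d * w - u * d * Dp w -
            (Dp u * d * w - ((k + 1 : ℕ) : Polynomial ↥K) * u * Dp d * w - u * d * Dp w) := by
        ring
      rw [e]
      exact dvd_sub (dvd_sub ⟨Dp u * w, by ring⟩ ⟨u * Dp w, by ring⟩) hdM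
    have hd4 : d ∣ Dp d := by
      have h5 := (hdp.dvd_mul.mp hd3).resolve_right hdw
      rcases hdp.dvd_mul.mp h5 with h6 | h7
      · rcases hdp.dvd_mul.mp h6 with h8 | h9
        · refine absurd (isUnit_of_dvd_unit h8 ?_) hdi.not_isUnit
          rw [← Polynomial.C_eq_natCast]
          exact Polynomial.isUnit_C.mpr
            (isUnit_iff_ne_zero.mpr (Nat.cast_ne_zero.mpr (Nat.succ_ne_zero k)))
        · exact absurd h9 (hdu (Nat.succ_ne_zero k))
      · exact h7
    have hDp0 : Dp d = 0 :=
      eq_zero_of_dvd_of_degree_lt hd4 (degree_Dpoly_lt δ K hK τ hδadd hδmul d hdm hddeg)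
    have hδd0 : δ (aeval t d) = 0 := by rw [← haD d, hDp0, map_zero]
    have hmemK := hnewconst _ hδd0
    have hdC : d = C (⟨aeval t d, hmemK⟩ : ↥K) := hinjeq _ _ (by rw [aeval_C]; rfl)
    rw [hdC] at hddeg
    exact absurd hddeg (not_lt.mpr degree_C_le)
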